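/- Let H_{p,q} denote the Hilbert-Samuel function of the ideal (x1⋯xp, y1⋯yq) in K[[x1,...,xp, y1,...,y_{n-p}]] with p + q ≤ n. Then H_{p,q} ≤ H_{p',q'} (pointwise) whenever p ≤ p' and q ≤ q', with p'+q' ≤ n. -/

import Mathlib

open MvPowerSeries

section AuxStmt19

open Finsupp

variable {σ τ : Type*} {K : Type*} [CommRing K]

private lemma emd_symm_apply (e : σ ≃ τ) (d : τ →₀ ℕ) :
    equivMapDomain e (equivMapDomain e.symm d) = d := by
  ext a; simp [equivMapDomain_apply]

private lemma emd_apply (e : σ ≃ τ) (d : σ →₀ ℕ) :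
    equivMapDomain e.symm (equivMapDomain e d) = d := by
  ext a; simp [equivMapDomain_apply]

private lemma emd_add (e : σ ≃ τ) (u v : σ →₀ ℕ) :
    equivMapDomain e (u + v) = equivMapDomain e u + equivMapDomain e v := by
  ext a; simp [equivMapDomain_apply]

private lemma emd_eq_zero (e : σ ≃ τ) (d : τ →₀ ℕ) :
    equivMapDomain e.symm d = 0 ↔ d = 0 := by
  constructor
  · intro h
    have := congrArg (equivMapDomain e) h
    rwa [emd_symm_apply, equivMapDomain_zero] at this
  · rintro rfl; exact equivMapDomain_zero

/-- The underlying function of the reindexing map. -/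
noncomputable def reindexFun (e : σ ≃ τ) (f : MvPowerSeries σ K) : MvPowerSeries τ K :=
  fun d => coeff (equivMapDomain e.symm d) f

lemma coeff_reindexFun (e : σ ≃ τ) (f : MvPowerSeries σ K) (d : τ →₀ ℕ) :
    coeff d (reindexFun e f) = coeff (equivMapDomain e.symm d) f := rfl

private lemma reindexFun_mul (e : σ ≃ τ) (f g : MvPowerSeries σ K) :
    reindexFun e (f * g) = reindexFun e f * reindexFun e g := by
  classical
  ext d
  rw [coeff_reindexFun, coeff_mul, coeff_mul]
  refine Finset.sum_nbij' (fun p => (equivMapDomain e p.1, equivMapDomain e p.2))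
    (fun p => (equivMapDomain e.symm p.1, equivMapDomain e.symm p.2)) ?_ ?_ ?_ ?_ ?_
  · intro p hp
    rw [Finset.HasAntidiagonal.mem_antidiagonal] at hp ⊢
    rw [← emd_add, hp, emd_symm_apply]
  · intro p hp
    rw [Finset.HasAntidiagonal.mem_antidiagonal] at hp ⊢
    have := congrArg (equivMapDomain e.symm) hp
    rwa [show ∀ u v : τ →₀ ℕ, equivMapDomain e.symm (u + v)
      = equivMapDomain e.symm u + equivMapDomain e.symm v from emd_add e.symm] at this
  · intro p _; ext <;> simp [emd_apply]
  · intro p _; ext <;> simp [emd_symm_apply]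
  · intro p _
    rw [coeff_reindexFun, coeff_reindexFun, emd_apply, emd_apply]

/-- Reindexing of multivariate power series along an equivalence of variables. -/
noncomputable def reindexPS (e : σ ≃ τ) : MvPowerSeries σ K ≃ₐ[K] MvPowerSeries τ K where
  toFun := reindexFun e
  invFun := reindexFun e.symm
  left_inv f := by
    ext d
    rw [coeff_reindexFun, coeff_reindexFun, Equiv.symm_symm, emd_apply]
  right_inv f := by
    ext d
    rw [coeff_reindexFun, coeff_reindexFun, Equiv.symm_symm, emd_symm_apply]
  map_add' f g := by ext d; simp [coeff_reindexFun]
  map_mul' := reindexFun_mul e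
  commutes' a := by
    classical
    ext d
    rw [coeff_reindexFun, MvPowerSeries.algebraMap_apply, MvPowerSeries.algebraMap_apply,
      coeff_C, coeff_C]
    simp only [emd_eq_zero]

lemma coeff_reindexPS (e : σ ≃ τ) (f : MvPowerSeries σ K) (d : τ →₀ ℕ) :
    coeff d (reindexPS e f) = coeff (equivMapDomain e.symm d) f := rfl

lemma reindexPS_monomial (e : σ ≃ τ) (d : σ →₀ ℕ) (a : K) :
    reindexPS e (monomial d a) = monomial (equivMapDomain e d) a := by
  classical
  ext d'
  rw [coeff_reindexPS, coeff_monomial, coeff_monomial]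
  congr 1
  simp only [eq_iff_iff]
  constructor
  · intro h; rw [← h, emd_symm_apply]
  · rintro rfl; rw [emd_apply]

lemma reindexPS_X (e : σ ≃ τ) (i : σ) :
    reindexPS e (X i : MvPowerSeries σ K) = X (e i) := by
  rw [X_def, reindexPS_monomial, equivMapDomain_single, X_def]

section Mpow

variable (K : Type*) [Field K] (n : ℕ)

local notation "R" => MvPowerSeries (Fin n) K
local notation "mI" => Ideal.span (Set.range (X : Fin n → MvPowerSeries (Fin n) K))

lemma mem_m_pow (j : ℕ) (f : MvPowerSeries (Fin n) K)
    (hf : ∀ d : Fin n →₀ ℕ, (d.sum fun _ x => x) < j → coeff d f = 0) :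
    f ∈ (mI : Ideal R) ^ j := by
  classical
  induction j generalizing f with
  | zero => rw [pow_zero, Ideal.one_eq_top]; trivial
  | succ j ih =>
    set g : Fin n → R := fun i e =>
      if (e + single i 1).support.min = (i : WithTop (Fin n)) then coeff (e + single i 1) f
      else 0 with hg
    have hcg : ∀ (i : Fin n) (e : Fin n →₀ ℕ), coeff e (g i) =
        if (e + single i 1).support.min = (i : WithTop (Fin n)) then coeff (e + single i 1) f
        else 0 := fun i e => rfl
    have hfg : f = ∑ i : Fin n, X i * g i := by
      ext d
      rw [map_sum]
      by_cases hd : d = 0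
      · subst hd
        rw [hf 0 (by simp)]
        symm
        apply Finset.sum_eq_zero
        intro i _
        exact coeff_zero_X_mul _ _
      · have hsupp : d.support.Nonempty := Finsupp.support_nonempty_iff.mpr hd
        set i0 := d.support.min' hsupp with hi0
        have hmin : d.support.min = (i0 : WithTop (Fin n)) := (Finset.coe_min' hsupp).symm
        have hi0mem : i0 ∈ d.support := Finset.min'_mem _ _
        have h1 : single i0 1 ≤ d := by
          rw [Finsupp.single_le_iff]
          exact Nat.one_le_iff_ne_zero.mpr (Finsupp.mem_support_iff.mp hi0mem)
        have h2 : (d - single i0 1) + single i0 1 = d := tsub_add_cancel_of_le h1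
        rw [Finset.sum_eq_single i0]
        · rw [X_def, coeff_monomial_mul, if_pos h1, one_mul, hcg, h2, if_pos hmin]
        · intro i _ hi
          rw [X_def, coeff_monomial_mul]
          by_cases hle : single i 1 ≤ d
          · rw [if_pos hle, one_mul, hcg, tsub_add_cancel_of_le hle, hmin, if_neg]
            simpa using Ne.symm hi
          · rw [if_neg hle]
        · intro h; exact absurd (Finset.mem_univ i0) h
    rw [hfg, pow_succ']
    apply Ideal.sum_mem
    intro i _
    apply Submodule.mul_mem_mul
    · exact Ideal.subset_span ⟨i, rfl⟩
    · apply ih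
      intro e he
      rw [hcg]
      split_ifs with h
      · apply hf
        rw [Finsupp.sum_add_index' (fun _ => rfl) (fun _ _ _ => rfl), Finsupp.sum_single_index rfl]
        omega
      · rfl

lemma finite_quot (k : ℕ) (I : Ideal R) (hI : (mI : Ideal R) ^ (k + 1) ≤ I) :
    Module.Finite K (R ⧸ I) := by
  classical
  set c : Fin n →₀ ℕ := equivFunOnFinite.symm (fun _ => k) with hc
  set T : Finset (Fin n →₀ ℕ) := Finset.Iic c with hT
  set φ := Ideal.Quotient.mkₐ K I with hφ
  refine ⟨⟨T.image (fun d => φ (monomial d (1 : K))), ?_⟩⟩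
  rw [eq_top_iff]
  rintro x -
  obtain ⟨f, rfl⟩ := Ideal.Quotient.mkₐ_surjective K I x
  set t : R := ∑ d ∈ T, monomial d (coeff d f) with ht
  have hcoefft : ∀ d : Fin n →₀ ℕ, d ∈ T → coeff d t = coeff d f := by
    intro d hd
    rw [ht, map_sum, Finset.sum_eq_single_of_mem d hd]
    · rw [coeff_monomial_same]
    · intro d' _ hne
      exact coeff_monomial_ne (Ne.symm hne) _
  have htail : f - t ∈ I := by
    apply hI
    apply mem_m_pow
    intro d hd
    have hdT : d ∈ T := by
      rw [hT, Finset.mem_Iic]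
      intro i
      have : d i ≤ d.sum fun _ x => x := by
        by_cases h : i ∈ d.support
        · exact Finset.single_le_sum (fun _ _ => Nat.zero_le _) h
        · simp [Finsupp.notMem_support_iff.mp h]
      simp only [hc, coe_equivFunOnFinite_symm]
      omega
    rw [map_sub, hcoefft d hdT, sub_self]
  have hmk : φ f = φ t := by
    rw [hφ, Ideal.Quotient.mkₐ_eq_mk, Ideal.Quotient.mk_eq_mk_iff_sub_mem]
    exact htail
  rw [hmk, ht, map_sum]
  apply Submodule.sum_mem
  intro d hd
  have : monomial d (coeff d f) = coeff d f • monomial d (1 : K) := by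
    rw [← map_smul, smul_eq_mul, mul_one]
  rw [this, map_smul]
  apply Submodule.smul_mem
  apply Submodule.subset_span
  exact Finset.mem_image.mpr ⟨d, hd, rfl⟩

end Mpow

lemma finrank_quot_le_of_le {K A : Type*} [Field K] [CommRing A] [Algebra K A]
    {I J : Ideal A} (h : I ≤ J) [Module.Finite K (A ⧸ I)] :
    Module.finrank K (A ⧸ J) ≤ Module.finrank K (A ⧸ I) := by
  let f : (A ⧸ I) →ₐ[K] A ⧸ J :=
    Ideal.quotientMapₐ J (AlgHom.id K A) (by simpa [Ideal.comap_id] using h)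
  have hsurj : Function.Surjective f := by
    intro y
    obtain ⟨a, rfl⟩ := Ideal.Quotient.mk_surjective y
    exact ⟨Ideal.Quotient.mk I a, by rw [Ideal.quotient_map_mkₐ]; rfl⟩
  calc Module.finrank K (A ⧸ J)
      = Module.finrank K (⊤ : Submodule K (A ⧸ J)) := (finrank_top _ _).symm
    _ = Module.finrank K (LinearMap.range f.toLinearMap) := by
        have hs2 : Function.Surjective f.toLinearMap := hsurj
        rw [LinearMap.range_eq_top.mpr hs2]
    _ ≤ Module.finrank K (A ⧸ I) := LinearMap.finrank_range_le _

lemma exists_perm (n p q p' q' : ℕ) (h : p' + q' ≤ n) (hp : p ≤ p') (hq : q ≤ q') :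
    ∃ σ : Equiv.Perm (Fin n), (∀ i : Fin n, (i : ℕ) < p → σ i = i) ∧
      (∀ i : Fin n, p ≤ (i : ℕ) → (i : ℕ) < p + q →
        p' ≤ ((σ i : Fin n) : ℕ) ∧ ((σ i : Fin n) : ℕ) < p' + q') := by
  have hn : p' + q ≤ n := by omega
  set f : Fin n → Fin n := fun i => if h1 : (i : ℕ) < p then i
    else if h2 : (i : ℕ) < p + q then ⟨(i : ℕ) + (p' - p), by omega⟩
    else if h3 : (i : ℕ) < p' + q then ⟨(i : ℕ) - q, by omega⟩ else i with hf
  have hval : ∀ i : Fin n, ((f i : Fin n) : ℕ) = if (i : ℕ) < p then (i : ℕ)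
      else if (i : ℕ) < p + q then (i : ℕ) + (p' - p)
      else if (i : ℕ) < p' + q then (i : ℕ) - q else (i : ℕ) := by
    intro i
    rw [hf]
    simp only
    split_ifs <;> rfl
  have hinj : Function.Injective f := by
    intro a b hab
    have h1 := congrArg Fin.val hab
    rw [hval, hval] at h1
    have ha := a.isLt
    have hb := b.isLt
    apply Fin.ext
    split_ifs at h1 <;> omega
  have hbij := Finite.injective_iff_bijective.mp hinj
  refine ⟨Equiv.ofBijective f hbij, ?_, ?_⟩
  · intro i hi
    apply Fin.ext
    show ((f i : Fin n) : ℕ) = i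
    rw [hval, if_pos hi]
  · intro i hi1 hi2
    show p' ≤ ((f i : Fin n) : ℕ) ∧ ((f i : Fin n) : ℕ) < p' + q'
    rw [hval, if_neg (by omega), if_pos hi2]
    omega

end AuxStmt19

/-- Let `H_{p,q}` be the Hilbert–Samuel function of the ideal
`(x₁⋯x_p, y₁⋯y_q)` in `K[[x₁,…,x_p, y₁,…,y_{n-p}]]` (variables indexed by
`Fin n`, the `x`-block being the first `p` variables and the `y`-block the
next `q`).  Then `H_{p,q}(k) ≤ H_{p',q'}(k)` for all `k` whenever
`p ≤ p'`, `q ≤ q'` and `p' + q' ≤ n`. -/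
theorem stmt_19 (K : Type*) [Field K] (n p q p' q' : ℕ)
    (hpq : p + q ≤ n) (hpq' : p' + q' ≤ n) (hp : p ≤ p') (hq : q ≤ q') :
    let R := MvPowerSeries (Fin n) K
    let m : Ideal R := Ideal.span (Set.range (X : Fin n → R))
    let Px : ℕ → R := fun a => ∏ i ∈ Finset.univ.filter (fun i : Fin n => (i : ℕ) < a), X i
    let Py : ℕ → ℕ → R := fun a b =>
      ∏ i ∈ Finset.univ.filter (fun i : Fin n => a ≤ (i : ℕ) ∧ (i : ℕ) < a + b), X i
    let H : ℕ → ℕ → ℕ → ℕ := fun a b k =>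
      Module.finrank K (R ⧸ (Ideal.span {Px a, Py a b} ⊔ m ^ (k + 1)))
    ∀ k, H p q k ≤ H p' q' k := by
  intro R m Px Py H k
  obtain ⟨σ, hσ1, hσ2⟩ := exists_perm n p q p' q' hpq' hp hq
  set Φ : R ≃ₐ[K] R := reindexPS σ with hΦ
  have hΦX : ∀ i : Fin n, Φ (X i) = X (σ i) := fun i => reindexPS_X σ i
  have hPx : Φ (Px p) = Px p := by
    rw [map_prod]
    apply Finset.prod_congr rfl
    intro i hi
    rw [hΦX i, hσ1 i (Finset.mem_filter.mp hi).2]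
  have hPxdvd : Φ (Px p) ∣ Px p' := by
    rw [hPx]
    apply Finset.prod_dvd_prod_of_subset
    intro i hi
    rw [Finset.mem_filter] at hi ⊢
    exact ⟨hi.1, by omega⟩
  have hPydvd : Φ (Py p q) ∣ Py p' q' := by
    rw [map_prod]
    rw [show (∏ i ∈ Finset.univ.filter (fun i : Fin n => p ≤ (i : ℕ) ∧ (i : ℕ) < p + q), Φ (X i))
        = ∏ i ∈ Finset.univ.filter (fun i : Fin n => p ≤ (i : ℕ) ∧ (i : ℕ) < p + q), X (σ i)
      from Finset.prod_congr rfl fun i _ => hΦX i]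
    rw [← Finset.prod_image (g := ⇑σ) (f := fun j : Fin n => (X j : R))
      (fun i _ j _ hij => σ.injective hij)]
    apply Finset.prod_dvd_prod_of_subset
    intro j hj
    rw [Finset.mem_image] at hj
    obtain ⟨i, hi, rfl⟩ := hj
    rw [Finset.mem_filter] at hi ⊢
    exact ⟨Finset.mem_univ _, hσ2 i hi.2.1 hi.2.2⟩
  set J1 : Ideal R := Ideal.span {Px p, Py p q} ⊔ m ^ (k + 1) with hJ1
  set J3 : Ideal R := Ideal.span {Px p', Py p' q'} ⊔ m ^ (k + 1) with hJ3
  set J1' : Ideal R := Ideal.map (Φ : R →+* R) J1 with hJ1'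
  have hmapm : Ideal.map (Φ : R →+* R) m = m := by
    rw [Ideal.map_span]
    congr 1
    rw [← Set.range_comp]
    rw [show (⇑(Φ : R →+* R)) ∘ (X : Fin n → R) = (X : Fin n → R) ∘ ⇑σ
      from funext fun i => hΦX i]
    exact σ.surjective.range_comp _
  have hmap : J1' = Ideal.span {Φ (Px p), Φ (Py p q)} ⊔ m ^ (k + 1) := by
    rw [hJ1', hJ1, Ideal.map_sup, Ideal.map_span, Ideal.map_pow, hmapm,
      Set.image_insert_eq, Set.image_singleton]
    rfl
  have hle : J3 ≤ J1' := by
    rw [hmap, hJ3]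
    apply sup_le_sup_right
    rw [Ideal.span_le]
    intro x hx
    rcases hx with rfl | hx
    · obtain ⟨c, hc⟩ := hPxdvd
      rw [hc]
      exact Ideal.mul_mem_right _ _ (Ideal.subset_span (Set.mem_insert _ _))
    · rw [Set.mem_singleton_iff] at hx
      subst hx
      obtain ⟨c, hc⟩ := hPydvd
      rw [hc]
      exact Ideal.mul_mem_right _ _
        (Ideal.subset_span (Set.mem_insert_of_mem _ rfl))
  have hfin : Module.Finite K (R ⧸ J3) := finite_quot K n k J3 le_sup_right
  have heq : Module.finrank K (R ⧸ J1) = Module.finrank K (R ⧸ J1') :=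
    (Ideal.quotientEquivAlg J1 J1' Φ hJ1').toLinearEquiv.finrank_eq
  show Module.finrank K (R ⧸ J1) ≤ Module.finrank K (R ⧸ J3)
  rw [heq]
  exact finrank_quot_le_of_le hle
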